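/- Let S be an infinite set and n ≥ 1 a natural number. Then every nonempty clopen subset of CC_n(2^S) contains a chain of 2^S of cardinality exactly n. -/

import Mathlib

open Set TopologicalSpace

/-- The set of nonempty closed chains of a Priestley space `X`. -/
def CC (X : Type*) [TopologicalSpace X] [Preorder X] : Set (Set X) :=
  {C | C.Nonempty ∧ IsClosed C ∧ IsChain (· ≤ ·) C}

variable {X : Type*} [TopologicalSpace X] [Preorder X]

/-- `□A = {C ∈ CC(X) | C ⊆ A}`. -/
def ccBox (A : Set X) : Set ↥(CC X) := {C | (C : Set X) ⊆ A}

/-- `◇A = {C ∈ CC(X) | C ∩ A ≠ ∅}`. -/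
def ccDia (A : Set X) : Set ↥(CC X) := {C | ((C : Set X) ∩ A).Nonempty}

/-- The Vietoris topology on `CC X`, generated by the subbasis `{□V, ◇V | V clopen}`. -/
instance ccTop : TopologicalSpace ↥(CC X) :=
  generateFrom {S | ∃ V : Set X, IsClopen V ∧ (S = ccBox V ∨ S = ccDia V)}

/-- The order `⊴` on closed chains: `C₁ ⊴ C₂` iff `C₂ ⊆ C₁` and `C₂` is an upset in `C₁`. -/
def lec (C₁ C₂ : Set X) : Prop :=
  C₂ ⊆ C₁ ∧ ∀ x ∈ C₂, ∀ y ∈ C₁, x ≤ y → y ∈ C₂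

/-- `CC_n(X)`: the nonempty (closed) chains of `X` of cardinality at most `n`, with the
subspace topology induced by `CC(X)`. -/
abbrev CCn (X : Type*) [TopologicalSpace X] [Preorder X] (n : ℕ) : Type _ :=
  {C : ↥(CC X) // (C : Set X).encard ≤ (n : ℕ∞)}

lemma exists_support {S : Type*} (V : Set (S → Bool)) (hV : IsClopen V) :
    ∃ T : Set S, T.Finite ∧ ∀ x y : S → Bool, (∀ s ∈ T, x s = y s) → x ∈ V → y ∈ V := by
  have hcyl : ∀ x : S → Bool, ∃ I : Finset S, x ∈ V → {y : S → Bool | ∀ s ∈ I, y s = x s} ⊆ V := by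
    intro x
    by_cases hx : x ∈ V
    · obtain ⟨I, u, hu, hsub⟩ := isOpen_pi_iff.mp hV.isOpen x hx
      exact ⟨I, fun _ y hy => hsub fun s hs => by rw [hy s hs]; exact (hu s hs).2⟩
    · exact ⟨∅, fun h => absurd h hx⟩
  choose I hI using hcyl
  have hcomp : IsCompact V := hV.isClosed.isCompact
  obtain ⟨t, hts, hcov⟩ := hcomp.elim_nhds_subcover (fun x => {y : S → Bool | ∀ s ∈ I x, y s = x s})
    (fun x _ => by
      refine IsOpen.mem_nhds ?_ (fun s _ => rfl)
      show IsOpen {y : S → Bool | ∀ s ∈ I x, y s = x s}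
      have : {y : S → Bool | ∀ s ∈ I x, y s = x s} = Set.pi ↑(I x) (fun s => {x s}) := by
        ext y; simp [Set.mem_pi]
      rw [this]
      exact isOpen_set_pi (I x).finite_toSet (fun s _ => isOpen_discrete _))
  refine ⟨⋃ x ∈ t, ↑(I x), t.finite_toSet.biUnion (fun x _ => (I x).finite_toSet), ?_⟩
  intro x y hxy hx
  obtain ⟨x₀, hx₀t, hx₀⟩ := Set.mem_iUnion₂.mp (hcov hx)
  refine hI x₀ (hts x₀ hx₀t) ?_
  intro s hs
  rw [← hxy s (Set.mem_iUnion₂.mpr ⟨x₀, hx₀t, hs⟩)]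
  exact hx₀ s hs

lemma key_extend {S : Type*} [Infinite S] (n : ℕ) (T : Set S) (hT : T.Finite)
    (C : Set (S → Bool)) (hCne : C.Nonempty) (hchain : IsChain (· ≤ ·) C)
    (hCcard : C.encard ≤ (n : ℕ∞)) (hmn : C.encard ≠ (n : ℕ∞)) :
    ∃ C' : Set (S → Bool), C ⊆ C' ∧ IsChain (· ≤ ·) C' ∧ C'.encard = (n : ℕ∞) ∧
      ∀ y ∈ C', ∃ x ∈ C, ∀ s ∈ T, y s = x s := by
  classical
  have hfin : C.Finite :=
    Set.encard_lt_top_iff.mp (lt_of_le_of_lt hCcard (WithTop.coe_lt_top n))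
  haveI := hfin.to_subtype
  set m := C.ncard with hm_def
  have hm : C.encard = (m : ℕ∞) := by
    rw [hm_def, Set.ncard_def]
    exact (ENat.coe_toNat (Set.encard_ne_top_iff.mpr hfin)).symm
  have hmle : m ≤ n := by
    rw [hm] at hCcard; exact_mod_cast hCcard
  have hmlt : m < n := by
    rcases lt_or_eq_of_le hmle with h | h
    · exact h
    · exact absurd (by rw [hm, h]) hmn
  set r := n - m with hr_def
  have hr1 : 1 ≤ r := by omega
  -- pigeonhole: find infinitely many coordinates outside T on which all elements of C agree
  have hAex : ∃ v : ↑C → Bool, {s : S | s ∉ T ∧ ∀ c : ↑C, (c : S → Bool) s = v c}.Infinite := by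
    by_contra h
    push_neg at h
    have hsub : Tᶜ ⊆ ⋃ v : ↑C → Bool, {s : S | s ∉ T ∧ ∀ c : ↑C, (c : S → Bool) s = v c} :=
      fun s hs => Set.mem_iUnion.2 ⟨fun c => (c : S → Bool) s, hs, fun c => rfl⟩
    exact hT.infinite_compl
      ((Set.finite_iUnion (fun v => h v)).subset hsub)
  obtain ⟨v, hA⟩ := hAex
  have e := hA.natEmbedding
  set d : ℕ → S := fun i => (e i : S) with hd_def
  have hd_inj : Function.Injective d := fun i j h => e.injective (Subtype.ext h)
  have hdT : ∀ i, d i ∉ T := fun i => (e i).2.1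
  have hdv : ∀ i (c : ↑C), (c : S → Bool) (d i) = v c := fun i c => (e i).2.2 c
  set U : Set (S → Bool) := {c | ∃ hc : c ∈ C, v ⟨c, hc⟩ = true} with hU_def
  have hUC : U ⊆ C := fun c hc => hc.1
  have hkey : ∀ c (hc : c ∈ C) (i : ℕ), c (d i) = true ↔ c ∈ U := by
    intro c hc i
    have h2 : c (d i) = v ⟨c, hc⟩ := hdv i ⟨c, hc⟩
    rw [h2]
    exact ⟨fun h => ⟨hc, h⟩, fun ⟨hc', h⟩ => h⟩
  -- a pivot element b
  have hb : ∃ b ∈ C, (∀ c ∈ C, c ∉ U → c ≤ b) ∧ (∀ c ∈ U, b ≤ c) := by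
    by_cases hU : U.Nonempty
    · obtain ⟨b, hbU, hbmin⟩ := Set.Finite.exists_minimalFor id U (hfin.subset hUC) hU
      refine ⟨b, hUC hbU, fun c hc hcU => ?_, fun c hc => ?_⟩
      · rcases hchain.total (hUC hbU) hc with h | h
        · exfalso
          apply hcU
          rw [← hkey c hc 0]
          have h0 : b (d 0) = true := (hkey b (hUC hbU) 0).mpr hbU
          have := h (d 0)
          rw [h0] at this
          exact le_antisymm (Bool.le_true _) this
        · exact h
      · rcases hchain.total (hUC hbU) (hUC hc) with h | h
        · exact h
        · exact hbmin hc h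
    · obtain ⟨b, hbC, hbmax⟩ := Set.Finite.exists_maximalFor id C hfin hCne
      refine ⟨b, hbC, fun c hc _ => ?_, fun c hc => absurd ⟨c, hc⟩ hU⟩
      rcases hchain.total hbC hc with h | h
      · exact hbmax hc h
      · exact h
  obtain ⟨b, hbC, hb1, hb2⟩ := hb
  -- the new points
  set y : ℕ → S → Bool := fun j s =>
    if (∃ i, i ≤ r ∧ d i = s) then (decide (∃ i, i < j ∧ d i = s)) else b s with hy_def
  have hyd : ∀ j i, i ≤ r → y j (d i) = decide (i < j) := by
    intro j i hi
    have h1 : (∃ i', i' ≤ r ∧ d i' = d i) := ⟨i, hi, rfl⟩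
    simp only [hy_def, if_pos h1]
    apply decide_eq_decide.mpr
    constructor
    · rintro ⟨i', hi', he⟩
      rwa [← hd_inj he]
    · exact fun h => ⟨i, h, rfl⟩
  have hyb : ∀ j, ∀ s ∈ T, y j s = b s := by
    intro j s hs
    have : ¬ ∃ i, i ≤ r ∧ d i = s := by rintro ⟨i, -, rfl⟩; exact hdT i hs
    simp only [hy_def, if_neg this]
  have hymono : ∀ j j', j ≤ j' → y j ≤ y j' := by
    intro j j' hjj s
    simp only [hy_def]
    split
    · by_cases h : ∃ i, i < j ∧ d i = s
      · have h' : ∃ i, i < j' ∧ d i = s := by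
          obtain ⟨i, hi, he⟩ := h
          exact ⟨i, hi.trans_le hjj, he⟩
        simp [h, h']
      · simp [h]
    · exact le_refl _
  have hlow : ∀ c ∈ C, c ∉ U → ∀ j, c ≤ y j := by
    intro c hc hcU j s
    simp only [hy_def]
    split
    · rename_i h
      obtain ⟨i, hi, rfl⟩ := h
      have hne : c (d i) ≠ true := fun h => hcU ((hkey c hc i).mp h)
      have hf : c (d i) = false := Bool.eq_false_iff.mpr hne
      rw [hf]
      exact Bool.false_le _
    · exact hb1 c hc hcU s
  have hhigh : ∀ c ∈ U, ∀ j, y j ≤ c := by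
    intro c hc j s
    simp only [hy_def]
    split
    · rename_i h
      obtain ⟨i, hi, rfl⟩ := h
      rw [(hkey c (hUC hc) i).mpr hc]
      exact Bool.le_true _
    · exact hb2 c hc s
  have hy_ne : ∀ j j', 1 ≤ j → j < j' → j' ≤ r → y j ≠ y j' := by
    intro j j' h1 h2 h3 heq
    have e1 : y j (d j) = decide (j < j) := hyd j j (by omega)
    have e2 : y j' (d j) = decide (j < j') := hyd j' j (by omega)
    rw [heq, e2] at e1
    simp [h2] at e1
  have hy_notC : ∀ j, 1 ≤ j → j ≤ r → y j ∉ C := by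
    intro j h1 h2 hyC
    have e0 : y j (d 0) = true := by rw [hyd j 0 (by omega)]; simp; omega
    have er : y j (d r) = false := by rw [hyd j r le_rfl]; simp; omega
    have := (hkey (y j) hyC 0).mp e0
    have := (hkey (y j) hyC r).mpr this
    rw [er] at this
    exact Bool.false_ne_true this
  refine ⟨C ∪ y '' ↑(Finset.Icc 1 r), Set.subset_union_left, ?_, ?_, ?_⟩
  · -- chain
    rintro a (ha | ⟨j, hj, rfl⟩) a' (ha' | ⟨j', hj', rfl⟩) hne
    · exact hchain ha ha' hne
    · by_cases haU : a ∈ U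
      · exact Or.inr (hhigh a haU j')
      · exact Or.inl (hlow a ha haU j')
    · by_cases haU : a' ∈ U
      · exact Or.inl (hhigh a' haU j)
      · exact Or.inr (hlow a' ha' haU j)
    · rcases le_total j j' with h | h
      · exact Or.inl (hymono j j' h)
      · exact Or.inr (hymono j' j h)
  · -- cardinality
    have hdisj : Disjoint C (y '' ↑(Finset.Icc 1 r)) := by
      rw [Set.disjoint_right]
      rintro a ⟨j, hj, rfl⟩ haC
      simp only [Finset.coe_Icc, Set.mem_Icc] at hj
      exact hy_notC j hj.1 hj.2 haC
    rw [Set.encard_union_eq hdisj, hm]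
    have hinj : Set.InjOn y ↑(Finset.Icc 1 r) := by
      intro j hj j' hj' heq
      simp only [Finset.coe_Icc, Set.mem_Icc] at hj hj'
      by_contra hne
      rcases Nat.lt_or_ge j j' with h | h
      · exact hy_ne j j' hj.1 h hj'.2 heq
      · exact hy_ne j' j hj'.1 (by omega) hj.2 heq.symm
    rw [hinj.encard_image, Set.encard_coe_eq_coe_finsetCard, Nat.card_Icc]
    have : m + (r + 1 - 1) = n := by omega
    exact_mod_cast congrArg Nat.cast this
  · -- T-agreement
    rintro a (ha | ⟨j, hj, rfl⟩)
    · exact ⟨a, ha, fun s _ => rfl⟩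
    · exact ⟨b, hbC, hyb j⟩

/-- For `S` infinite and `n ≥ 1`, every nonempty clopen subset of `CC_n(2^S)` contains a
chain of `2^S` of cardinality exactly `n`. -/
theorem stmt16 (S : Type*) [Infinite S] (n : ℕ) (hn : 1 ≤ n) :
    ∀ 𝒱 : Set (CCn (S → Bool) n), IsClopen 𝒱 → 𝒱.Nonempty →
      ∃ C ∈ 𝒱, ((C : ↥(CC (S → Bool))) : Set (S → Bool)).encard = (n : ℕ∞) := by
  intro 𝒱 h𝒱 hne
  obtain ⟨C0, hC0⟩ := hne
  by_cases hcase : ((C0 : ↥(CC (S → Bool))) : Set (S → Bool)).encard = (n : ℕ∞)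
  · exact ⟨C0, hC0, hcase⟩
  obtain ⟨Uo, hUo, hUo𝒱⟩ := isOpen_induced_iff.mp h𝒱.isOpen
  have hC0U : (C0 : ↥(CC (S → Bool))) ∈ Uo := by
    rw [← hUo𝒱] at hC0; exact hC0
  have hbasis := TopologicalSpace.isTopologicalBasis_of_subbasis
    (rfl : (ccTop : TopologicalSpace ↥(CC (S → Bool))) =
      generateFrom {S' | ∃ V : Set (S → Bool), IsClopen V ∧ (S' = ccBox V ∨ S' = ccDia V)})
  obtain ⟨B, ⟨f, ⟨hffin, hfsub⟩, rfl⟩, hCB, hBU⟩ :=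
    hbasis.exists_subset_of_mem_open hC0U hUo
  classical
  -- choose clopen sets for each member of f
  have hVex : ∀ g : Set ↥(CC (S → Bool)), ∃ V : Set (S → Bool),
      g ∈ f → IsClopen V ∧ (g = ccBox V ∨ g = ccDia V) := by
    intro g
    by_cases hg : g ∈ f
    · obtain ⟨V, hV⟩ := hfsub hg
      exact ⟨V, fun _ => hV⟩
    · exact ⟨∅, fun h => absurd h hg⟩
  choose V hVspec using hVex
  have hTex : ∀ g : Set ↥(CC (S → Bool)), ∃ Tg : Set S, Tg.Finite ∧
      (g ∈ f → ∀ x y : S → Bool, (∀ s ∈ Tg, x s = y s) → x ∈ V g → y ∈ V g) := by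
    intro g
    by_cases hg : g ∈ f
    · obtain ⟨Tg, hTg1, hTg2⟩ := exists_support (V g) (hVspec g hg).1
      exact ⟨Tg, hTg1, fun _ => hTg2⟩
    · exact ⟨∅, Set.finite_empty, fun h => absurd h hg⟩
  choose Tg hTgfin hTgsupp using hTex
  set T : Set S := ⋃ g ∈ f, Tg g with hT_def
  have hTfin : T.Finite := hffin.biUnion (fun g _ => hTgfin g)
  set Cv : Set (S → Bool) := ((C0 : ↥(CC (S → Bool))) : Set (S → Bool)) with hCv_def
  have hCmem : Cv ∈ CC (S → Bool) := (C0 : ↥(CC (S → Bool))).2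
  obtain ⟨hCne', hCcl, hCch⟩ := hCmem
  obtain ⟨C', hsub, hch', hcard', hagree⟩ :=
    key_extend n T hTfin Cv hCne' hCch C0.2 hcase
  have hC'fin : C'.Finite := by
    rw [← Set.encard_lt_top_iff, hcard']
    exact WithTop.coe_lt_top n
  have hC'mem : C' ∈ CC (S → Bool) :=
    ⟨hCne'.mono hsub, hC'fin.isClosed, hch'⟩
  set D : CCn (S → Bool) n := ⟨⟨C', hC'mem⟩, le_of_eq hcard'⟩ with hD_def
  refine ⟨D, ?_, hcard'⟩
  rw [← hUo𝒱]
  refine hBU ?_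
  intro g hg
  rcases (hVspec g hg).2 with hbox | hdia
  · rw [hbox]
    intro x hx
    obtain ⟨x0, hx0, hag⟩ := hagree x hx
    have hx0V : x0 ∈ V g := by
      have := hCB g hg
      rw [hbox] at this
      exact this hx0
    refine hTgsupp g hg x0 x ?_ hx0V
    intro s hs
    exact (hag s (Set.mem_biUnion hg hs)).symm
  · rw [hdia]
    have := hCB g hg
    rw [hdia] at this
    exact this.mono (Set.inter_subset_inter_left _ hsub)
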